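/- Let Γ = (V, H, s, ι, ρ) be a ribbon graph with every fiber s⁻¹(v) finite, fix a cutting {φ_v} and r ≥ 1, let Γ^{ℤ} = (V, H × ℤ, s̃_ℤ, ι̃_ℤ, ρ̃_ℤ) be the ℤ-cover and Γ^{(r)} = (V, H × ℤ/rℤ, s̃, ι̃, ρ̃) the r-fold cover, let d(v) = val(v) for every v, and let ν̃_ℤ be the Nakayama map of (Γ^{ℤ}, d). Then the map H × ℤ → H × ℤ/rℤ, (h, j) ↦ (h, j mod r), induces a well-defined bijection from the set of ⟨ν̃_ℤ^{r}⟩-orbits on H × ℤ onto H × ℤ/rℤ which commutes with the structure maps: it carries the maps induced by s̃_ℤ, ι̃_ℤ, ρ̃_ℤ on the orbit set to s̃, ι̃, ρ̃ on H × ℤ/rℤ. In other words, Γ^{(r)} is isomorphic as a ribbon graph to the quotient Γ^{ℤ}/⟨ν̃^{r}⟩. -/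
import Mathlib


/-- A ribbon graph: vertices `V`, half-edges `H`, source map `s`,
fixed-point-free involution `ι`, and a permutation `ρ` whose orbits are
exactly the fibers `s⁻¹(v)`. -/
structure RibbonGraph (V H : Type*) where
  s : H → V
  ι : H → H
  ρ : Equiv.Perm H
  ι_invol : ∀ h, ι (ι h) = h
  ι_ne : ∀ h, ι h ≠ h
  s_surj : Function.Surjective s
  s_ρ : ∀ h, s (ρ h) = s h
  ρ_trans : ∀ h h', s h = s h' → ∃ k : ℤ, (ρ ^ k) h = h'

/-- A cutting of a ribbon graph with finite fibers: for each vertex `v` a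
bijection `φ v : Fin (n v) → s⁻¹(v)` enumerating the fiber compatibly with
`ρ`, i.e. `ρ(φ v i) = φ v (i+1)` for `i + 1 < n v`. -/
structure Cutting {V H : Type*} (Γ : RibbonGraph V H) where
  n : V → ℕ
  φ : ∀ v, Fin (n v) → H
  φ_s : ∀ v i, Γ.s (φ v i) = v
  φ_inj : ∀ v, Function.Injective (φ v)
  φ_surj : ∀ v h, Γ.s h = v → ∃ i, φ v i = h
  φ_ρ : ∀ (v) (i : Fin (n v)) (hi : (i : ℕ) + 1 < n v),
      Γ.ρ (φ v i) = φ v ⟨(i : ℕ) + 1, hi⟩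

/-- The index of a half-edge in the enumeration of its fiber. -/
noncomputable def Cutting.idx {V H : Type*} {Γ : RibbonGraph V H}
    (C : Cutting Γ) (h : H) : Fin (C.n (Γ.s h)) :=
  (C.φ_surj (Γ.s h) h rfl).choose

/-- The permutation `ρ̃` of the cover with half-edge set `H × J`
(for `J = ℤ/rℤ` or `J = ℤ`): with `s(h) = v` and `h = φ_v(i)`,
`ρ̃(h, j) = (φ_v(i+1), j)` if `i < n_v − 1`, and
`ρ̃(h, j) = (φ_v(0), j+1)` if `i = n_v − 1`. -/
noncomputable def coverRho {V H : Type*} {Γ : RibbonGraph V H} (C : Cutting Γ)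
    {J : Type*} [Add J] [One J] : H × J → H × J :=
  fun x =>
    if hlt : (C.idx x.1 : ℕ) + 1 < C.n (Γ.s x.1) then
      (C.φ (Γ.s x.1) ⟨(C.idx x.1 : ℕ) + 1, hlt⟩, x.2)
    else
      (C.φ (Γ.s x.1) ⟨0, Nat.lt_of_le_of_lt (Nat.zero_le _) (C.idx x.1).isLt⟩, x.2 + 1)

/-- The setoid on a type whose classes are the orbits of the cyclic group
generated by a permutation. -/
def permOrbitSetoid {X : Type*} (ν : Equiv.Perm X) : Setoid X where
  r x y := ∃ k : ℤ, (ν ^ k) x = y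
  iseqv := by
    constructor
    · intro x
      exact ⟨0, rfl⟩
    · rintro x y ⟨k, hk⟩
      refine ⟨-k, ?_⟩
      rw [← hk, ← Equiv.Perm.mul_apply, ← zpow_add]
      simp
    · rintro x y z ⟨k, hk⟩ ⟨l, hl⟩
      refine ⟨l + k, ?_⟩
      rw [← hl, ← hk, ← Equiv.Perm.mul_apply, ← zpow_add]

section Aux
variable {V H : Type*} {Γ : RibbonGraph V H} (C : Cutting Γ)

lemma idx_spec (h : H) : C.φ (Γ.s h) (C.idx h) = h :=
  (C.φ_surj (Γ.s h) h rfl).choose_spec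

lemma idx_eq (h : H) (v : V) (i : Fin (C.n v)) (e : Γ.s h = v) (hφ : C.φ v i = h) :
    (C.idx h : ℕ) = (i : ℕ) := by
  subst e
  have := C.φ_inj (Γ.s h) ((idx_spec C h).trans hφ.symm)
  rw [this]

lemma coverRho_mid {J : Type*} [Add J] [One J] (h : H) (j : J) (v : V) (i : ℕ)
    (e : Γ.s h = v) (hi : (C.idx h : ℕ) = i) (hlt : i + 1 < C.n v) :
    coverRho C (h, j) = (C.φ v ⟨i + 1, hlt⟩, j) := by
  subst e; subst hi
  simp only [coverRho]
  rw [dif_pos hlt]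

lemma coverRho_last {J : Type*} [Add J] [One J] (h : H) (j : J) (v : V)
    (e : Γ.s h = v) (hge : C.n v ≤ (C.idx h : ℕ) + 1) (h0 : 0 < C.n v) :
    coverRho C (h, j) = (C.φ v ⟨0, h0⟩, j + 1) := by
  subst e
  simp only [coverRho]
  rw [dif_neg (not_lt.2 hge)]

lemma forward {J : Type*} [Add J] [One J] (v : V) (j : J) :
    ∀ (m i : ℕ) (him : i + m < C.n v),
      (coverRho C)^[m] (C.φ v ⟨i, lt_of_le_of_lt (Nat.le_add_right i m) him⟩, j)
        = (C.φ v ⟨i + m, him⟩, j) := by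
  intro m
  induction m with
  | zero => intro i him; simp
  | succ m ih =>
      intro i him
      rw [Function.iterate_succ_apply]
      have hlt : i + 1 < C.n v := by omega
      rw [coverRho_mid C _ j v i (C.φ_s v _)
        (idx_eq C _ v ⟨i, _⟩ (C.φ_s v _) rfl) hlt]
      have him' : (i + 1) + m < C.n v := by omega
      have e : (⟨i + (m + 1), him⟩ : Fin (C.n v)) = ⟨i + 1 + m, him'⟩ := by
        ext; simp; omega
      rw [e]
      exact ih (i + 1) him'

lemma iterate_n {J : Type*} [Add J] [One J] (h : H) (j : J) :
    (coverRho C)^[C.n (Γ.s h)] (h, j) = (h, j + 1) := by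
  have hi : (C.idx h : ℕ) < C.n (Γ.s h) := (C.idx h).isLt
  have hh : C.φ (Γ.s h) ⟨(C.idx h : ℕ), (C.idx h).isLt⟩ = h := by
    simpa [Fin.eta] using idx_spec C h
  have hsplit : C.n (Γ.s h)
      = (C.idx h : ℕ) + 1 + (C.n (Γ.s h) - 1 - (C.idx h : ℕ)) := by omega
  -- step A
  have hA := forward C (Γ.s h) j (C.n (Γ.s h) - 1 - (C.idx h : ℕ)) (C.idx h : ℕ)
    (by omega)
  rw [hh] at hA
  have eA : (⟨(C.idx h : ℕ) + (C.n (Γ.s h) - 1 - (C.idx h : ℕ)), by omega⟩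
      : Fin (C.n (Γ.s h))) = ⟨C.n (Γ.s h) - 1, by omega⟩ := by
    ext; simp; omega
  rw [eA] at hA
  -- step B
  have hB : coverRho C (C.φ (Γ.s h) ⟨C.n (Γ.s h) - 1, by omega⟩, j)
      = (C.φ (Γ.s h) ⟨0, by omega⟩, j + 1) := by
    refine coverRho_last C _ j (Γ.s h) (C.φ_s _ _) ?_ (by omega)
    rw [idx_eq C _ (Γ.s h) ⟨C.n (Γ.s h) - 1, by omega⟩ (C.φ_s _ _) rfl]
    simp
    omega
  -- step C
  have hC := forward C (Γ.s h) (j + 1) (C.idx h : ℕ) 0 (by omega)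
  have eC : (⟨0 + (C.idx h : ℕ), by omega⟩ : Fin (C.n (Γ.s h)))
      = ⟨(C.idx h : ℕ), (C.idx h).isLt⟩ := by ext; simp
  rw [eC, hh] at hC
  calc (coverRho C)^[C.n (Γ.s h)] (h, j)
      = (coverRho C)^[(C.idx h : ℕ)]
          ((coverRho C)^[1]
            ((coverRho C)^[C.n (Γ.s h) - 1 - (C.idx h : ℕ)] (h, j))) := by
        rw [← Function.iterate_add_apply, ← Function.iterate_add_apply, ← hsplit]
    _ = (h, j + 1) := by
        rw [hA, Function.iterate_one, hB]
        exact hC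

lemma perm_pow_int {X : Type*} (σ : Equiv.Perm (X × ℤ)) (c : ℤ)
    (hσ : ∀ x, σ x = (x.1, x.2 + c)) :
    ∀ (k : ℤ) (x : X × ℤ), (σ ^ k) x = (x.1, x.2 + c * k) := by
  have hn : ∀ (m : ℕ) (x : X × ℤ), (σ ^ m) x = (x.1, x.2 + c * m) := by
    intro m
    induction m with
    | zero => intro x; simp
    | succ m ih =>
        intro x
        rw [pow_succ', Equiv.Perm.mul_apply, hσ, ih]
        refine Prod.ext rfl ?_
        push_cast
        ring
  intro k x
  cases k with
  | ofNat n =>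
      rw [Int.ofNat_eq_coe, zpow_natCast, hn]
  | negSucc n =>
      rw [zpow_negSucc, Equiv.Perm.inv_def, Equiv.symm_apply_eq, hn]
      refine Prod.ext rfl ?_
      rw [Int.negSucc_eq]
      push_cast
      ring
end Aux

/-- with d(v) = val(v) and ν̃_ℤ the Nakayama map of the ℤ-cover
(Γ^{ℤ}, d), the map (h, j) ↦ (h, j mod r) induces a well-defined bijection
from the set of ⟨ν̃_ℤ^r⟩-orbits on H × ℤ onto H × ℤ/rℤ commuting with the
structure maps; i.e. Γ^{(r)} ≅ Γ^{ℤ}/⟨ν̃^r⟩ as ribbon graphs. Here ρZ is the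
permutation ρ̃ of the ℤ-cover and νZ its Nakayama map. -/
theorem stmt18 {V H : Type*} (Γ : RibbonGraph V H) (C : Cutting Γ)
    (r : ℕ) (hr : 1 ≤ r)
    (ρZ : Equiv.Perm (H × ℤ)) (hρZ : ∀ x, ρZ x = coverRho C x)
    (νZ : Equiv.Perm (H × ℤ))
    (hνZ : ∀ x : H × ℤ, νZ x = (ρZ ^ (C.n (Γ.s x.1) : ℤ)) x) :
    ∃ F : Quotient (permOrbitSetoid (νZ ^ r)) → H × ZMod r,
      (∀ (h : H) (j : ℤ),
        F (Quotient.mk (permOrbitSetoid (νZ ^ r)) ((h, j) : H × ℤ)) = (h, (j : ZMod r))) ∧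
      Function.Bijective F ∧
      (∀ x : H × ℤ,
        Γ.s (F (Quotient.mk (permOrbitSetoid (νZ ^ r)) x)).1 = Γ.s x.1) ∧
      (∀ x : H × ℤ,
        F (Quotient.mk (permOrbitSetoid (νZ ^ r)) ((Γ.ι x.1, x.2) : H × ℤ))
          = (Γ.ι (F (Quotient.mk (permOrbitSetoid (νZ ^ r)) x)).1,
             (F (Quotient.mk (permOrbitSetoid (νZ ^ r)) x)).2)) ∧
      (∀ x : H × ℤ,
        F (Quotient.mk (permOrbitSetoid (νZ ^ r)) (coverRho C x))
          = coverRho C (F (Quotient.mk (permOrbitSetoid (νZ ^ r)) x))) := by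
  haveI : NeZero r := ⟨by omega⟩
  -- ρZ coincides with coverRho, so iterates agree
  have hρfun : ⇑ρZ = coverRho C := funext hρZ
  -- νZ adds 1 to the second coordinate
  have hν1 : ∀ x : H × ℤ, νZ x = (x.1, x.2 + 1) := by
    intro x
    obtain ⟨h, j⟩ := x
    have hc : ⇑(ρZ ^ (C.n (Γ.s h))) = (coverRho C)^[C.n (Γ.s h)] := by
      rw [Equiv.Perm.coe_pow, hρfun]
    rw [hνZ, zpow_natCast]
    show (ρZ ^ (C.n (Γ.s h))) (h, j) = (h, j + 1)
    rw [hc]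
    exact iterate_n C h j
  -- νZ ^ r adds r
  have hνr : ∀ x : H × ℤ, (νZ ^ r) x = (x.1, x.2 + (r : ℤ)) := by
    intro x
    rw [← zpow_natCast, perm_pow_int νZ 1 hν1]
    ring_nf
  -- powers of νZ ^ r
  have hνrk : ∀ (k : ℤ) (x : H × ℤ), ((νZ ^ r) ^ k) x = (x.1, x.2 + (r : ℤ) * k) :=
    perm_pow_int (νZ ^ r) (r : ℤ) hνr
  -- the underlying map
  set f : H × ℤ → H × ZMod r := fun x => (x.1, (x.2 : ZMod r)) with hf
  have hwd : ∀ x y : H × ℤ, (permOrbitSetoid (νZ ^ r)).r x y → f x = f y := by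
    rintro x y ⟨k, hk⟩
    rw [← hk, hνrk]
    refine Prod.ext rfl ?_
    show (x.2 : ZMod r) = (((x.2 + (r : ℤ) * k : ℤ)) : ZMod r)
    push_cast
    simp
  refine ⟨Quotient.lift f hwd, ?_, ⟨?_, ?_⟩, ?_, ?_, ?_⟩
  · intro h j; rfl
  · -- injective
    intro a b
    refine Quotient.inductionOn₂ a b ?_
    intro x y hxy
    have hxy' : f x = f y := hxy
    have h1 : x.1 = y.1 := show (f x).1 = (f y).1 from congrArg Prod.fst hxy'
    have h2 : (x.2 : ZMod r) = (y.2 : ZMod r) := show (f x).2 = (f y).2 from congrArg Prod.snd hxy'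

    rw [ZMod.intCast_eq_intCast_iff] at h2
    obtain ⟨k, hk⟩ := h2.dvd
    refine Quotient.sound ⟨k, ?_⟩
    rw [hνrk]
    refine Prod.ext h1 ?_
    show x.2 + (r : ℤ) * k = y.2
    linarith [hk]
  · -- surjective
    intro ⟨h, c⟩
    refine ⟨Quotient.mk _ ((h, (c.val : ℤ)) : H × ℤ), ?_⟩
    show ((h, ((c.val : ℤ) : ZMod r)) : H × ZMod r) = (h, c)
    refine Prod.ext rfl ?_
    push_cast
    simp [ZMod.natCast_val, ZMod.cast_id]
  · intro x; rfl
  · intro x; rfl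
  · -- commutes with ρ
    intro x
    show f (coverRho C x) = coverRho C (f x)
    rcases x with ⟨h, j⟩
    simp only [coverRho, hf]
    split_ifs with h1
    · rfl
    · refine Prod.ext rfl ?_
      push_cast
      rfl
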